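/- For every μ > 0 and every p ∈ ℝ one has ∫_{−2μ}^{2μ} (−log(|u|/(2μ)))·cos(p·u) du > 0. -/

import Mathlib

open MeasureTheory

open Real intervalIntegral in
private lemma abs_log_le_rpow {x : ℝ} (hx : 0 < x) (hx1 : x ≤ 1) :
    |Real.log x| ≤ 2 * x ^ (-(1/2) : ℝ) := by
  rw [abs_of_nonpos (Real.log_nonpos hx.le hx1)]
  have h := Real.log_le_sub_one_of_pos (Real.rpow_pos_of_pos hx (-(1/2)))
  rw [Real.log_rpow hx] at h
  have h2 : (0:ℝ) < x ^ (-(1/2) : ℝ) := Real.rpow_pos_of_pos hx _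
  linarith

open Real intervalIntegral in
private lemma il_log {b : ℝ} (hb : 0 < b) : IntervalIntegrable Real.log volume 0 b := by
  have hg : IntervalIntegrable (fun u : ℝ => 2 * u ^ (-(1/2):ℝ) + |Real.log b|) volume 0 b :=
    ((intervalIntegral.intervalIntegrable_rpow' (by norm_num)).const_mul 2).add
      intervalIntegrable_const
  refine hg.mono_fun' Real.measurable_log.aestronglyMeasurable ?_
  filter_upwards [MeasureTheory.ae_restrict_mem measurableSet_uIoc] with x hx
  rw [Set.uIoc_of_le hb.le] at hx
  rcases le_or_gt x 1 with h1 | h1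
  · have h2 := abs_log_le_rpow hx.1 h1
    have h3 : (0:ℝ) ≤ |Real.log b| := abs_nonneg _
    rw [Real.norm_eq_abs]
    linarith
  · rw [Real.norm_eq_abs, abs_of_nonneg (Real.log_nonneg h1.le)]
    have h2 : Real.log x ≤ Real.log b := Real.log_le_log (by linarith) hx.2
    have h3 : Real.log b ≤ |Real.log b| := le_abs_self _
    have h4 : (0:ℝ) ≤ 2 * x ^ (-(1/2):ℝ) := by positivity
    linarith

open Real intervalIntegral in
private lemma il_logcos {b : ℝ} (p : ℝ) (hb : 0 < b) :
    IntervalIntegrable (fun u => Real.log u * Real.cos (p * u)) volume 0 b := by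
  refine (il_log hb).norm.mono_fun' ?_ ?_
  · exact (Real.measurable_log.mul
      (Real.continuous_cos.measurable.comp (measurable_const.mul measurable_id))).aestronglyMeasurable
  · refine Filter.Eventually.of_forall fun x => ?_
    have h1 : |Real.cos (p * x)| ≤ 1 := Real.abs_cos_le_one _
    have h2 : (0:ℝ) ≤ |Real.log x| := abs_nonneg _
    simp only [Real.norm_eq_abs, norm_norm, abs_mul, abs_abs]
    nlinarith

open Real intervalIntegral in
private lemma h_norm_bound (p t : ℝ) :
    ‖(1 - Real.cos (p * t)) / (p ^ 2 * t ^ 2)‖ ≤ 1 / 2 := by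
  have hc : 1 - (p * t) ^ 2 / 2 ≤ Real.cos (p * t) := Real.one_sub_sq_div_two_le_cos
  have hc1 : Real.cos (p * t) ≤ 1 := Real.cos_le_one _
  rw [Real.norm_eq_abs, abs_of_nonneg (div_nonneg (by linarith) (by positivity))]
  rcases eq_or_ne (p ^ 2 * t ^ 2) 0 with h0 | h0
  · rw [h0, div_zero]; norm_num
  · have hpos : 0 < p ^ 2 * t ^ 2 := lt_of_le_of_ne (by positivity) (Ne.symm h0)
    rw [div_le_iff₀ hpos]
    nlinarith

open Real intervalIntegral in
private lemma il_h {p : ℝ} (b : ℝ) :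
    IntervalIntegrable (fun t => (1 - Real.cos (p * t)) / (p ^ 2 * t ^ 2)) volume 0 b := by
  refine (_root_.intervalIntegrable_const (c := (1/2 : ℝ))).mono_fun' ?_ ?_
  · exact ((continuous_const.sub (Real.continuous_cos.comp
      (continuous_const.mul continuous_id))).measurable.div
      ((measurable_const.mul (measurable_id.pow_const 2)))).aestronglyMeasurable
  · refine Filter.Eventually.of_forall fun t => ?_
    exact h_norm_bound p t

open Real intervalIntegral in
private lemma key_identity {a p : ℝ} (ha : 0 < a) (hp : p ≠ 0) :
    (∫ u in (0:ℝ)..a, (Real.log a - Real.log u) * Real.cos (p * u))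
      = (∫ t in (0:ℝ)..a, (1 - Real.cos (p * t)) / (p ^ 2 * t ^ 2))
        + (1 - Real.cos (p * a)) / (p ^ 2 * a) := by
  set F : ℝ → ℝ := fun y => Real.log y * (Real.sin (p * y) / p)
    - ∫ u in (0:ℝ)..y, Real.log u * Real.cos (p * u) with hF
  set G : ℝ → ℝ := fun y => (∫ t in (0:ℝ)..y, (1 - Real.cos (p * t)) / (p ^ 2 * t ^ 2))
    + (1 - Real.cos (p * y)) / (p ^ 2 * y) with hG
  -- LHS = F a
  have hLHS : (∫ u in (0:ℝ)..a, (Real.log a - Real.log u) * Real.cos (p * u)) = F a := by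
    have hcos : IntervalIntegrable (fun u => Real.log a * Real.cos (p * u)) volume 0 a :=
      (Continuous.intervalIntegrable (by continuity) 0 a)
    have h1 : (∫ u in (0:ℝ)..a, (Real.log a - Real.log u) * Real.cos (p * u))
        = (∫ u in (0:ℝ)..a, Real.log a * Real.cos (p * u))
          - ∫ u in (0:ℝ)..a, Real.log u * Real.cos (p * u) := by
      rw [← intervalIntegral.integral_sub hcos (il_logcos p ha)]
      congr 1; funext u; ring
    have h2 : (∫ u in (0:ℝ)..a, Real.cos (p * u)) = Real.sin (p * a) / p := by
      rw [intervalIntegral.integral_comp_mul_left Real.cos hp]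
      simp [integral_cos, div_eq_inv_mul]
    rw [h1, intervalIntegral.integral_const_mul, h2, hF]
  rw [hLHS]
  show F a = G a
  -- derivative of F
  have hderivF : ∀ x : ℝ, 0 < x → HasDerivAt F (Real.sin (p * x) / (p * x)) x := by
    intro x hx
    have h1 : HasDerivAt Real.log x⁻¹ x := Real.hasDerivAt_log hx.ne'
    have hc : HasDerivAt (fun y : ℝ => p * y) p x := by
      simpa using (hasDerivAt_id x).const_mul p
    have h2 : HasDerivAt (fun y => Real.sin (p * y) / p) (Real.cos (p * x)) x := by
      have h3 : HasDerivAt (fun y => Real.sin (p * y)) (Real.cos (p * x) * p) x :=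
        (Real.hasDerivAt_sin (p * x)).comp x hc
      have := h3.div_const p
      rwa [mul_div_assoc, div_self hp, mul_one] at this
    have h4 : HasDerivAt (fun y => ∫ u in (0:ℝ)..y, Real.log u * Real.cos (p * u))
        (Real.log x * Real.cos (p * x)) x := by
      refine intervalIntegral.integral_hasDerivAt_right (il_logcos p hx) ?_ ?_
      · exact (Real.measurable_log.mul
          (Real.continuous_cos.measurable.comp
            (measurable_const.mul measurable_id))).aestronglyMeasurable.stronglyMeasurableAtFilter
      · exact ((Real.continuousAt_log hx.ne').mul
          ((Real.continuous_cos.comp (continuous_const.mul continuous_id)).continuousAt))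
    have h5 := (h1.mul h2).sub h4
    have hx' : x ≠ 0 := hx.ne'
    refine h5.congr_deriv ?_
    field_simp
    ring
  -- derivative of G
  have hderivG : ∀ x : ℝ, 0 < x → HasDerivAt G (Real.sin (p * x) / (p * x)) x := by
    intro x hx
    have h4 : HasDerivAt (fun y => ∫ t in (0:ℝ)..y, (1 - Real.cos (p * t)) / (p ^ 2 * t ^ 2))
        ((1 - Real.cos (p * x)) / (p ^ 2 * x ^ 2)) x := by
      refine intervalIntegral.integral_hasDerivAt_right (il_h x) ?_ ?_
      · exact ((continuous_const.sub (Real.continuous_cos.comp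
          (continuous_const.mul continuous_id))).measurable.div
          ((measurable_const.mul (measurable_id.pow_const 2)))).aestronglyMeasurable.stronglyMeasurableAtFilter
      · refine ContinuousAt.div ?_ ?_ (by positivity)
        · exact (continuous_const.sub (Real.continuous_cos.comp
            (continuous_const.mul continuous_id))).continuousAt
        · exact (continuous_const.mul (continuous_pow 2)).continuousAt
    have hc : HasDerivAt (fun y : ℝ => p * y) p x := by
      simpa using (hasDerivAt_id x).const_mul p
    have hnum : HasDerivAt (fun y => 1 - Real.cos (p * y)) (Real.sin (p * x) * p) x := by
      have h3 : HasDerivAt (fun y => Real.cos (p * y)) (-Real.sin (p * x) * p) x :=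
        (Real.hasDerivAt_cos (p * x)).comp x hc
      have := (hasDerivAt_const x (1:ℝ)).sub h3
      exact this.congr_deriv (by ring)
    have hden : HasDerivAt (fun y : ℝ => p ^ 2 * y) (p ^ 2) x := by
      simpa using (hasDerivAt_id x).const_mul (p ^ 2)
    have h5 : HasDerivAt (fun y => (1 - Real.cos (p * y)) / (p ^ 2 * y))
        ((Real.sin (p * x) * p * (p ^ 2 * x) - (1 - Real.cos (p * x)) * p ^ 2)
          / (p ^ 2 * x) ^ 2) x :=
      hnum.div hden (by positivity)
    have h6 := h4.add h5
    refine h6.congr_deriv ?_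
    have hx' : x ≠ 0 := hx.ne'
    field_simp
    ring
  -- FTC on [ε, a] for every 0 < ε ≤ a
  have hFG : ∀ ε : ℝ, 0 < ε → ε ≤ a → F a - G a = F ε - G ε := by
    intro ε hε hεa
    have hicc : Set.uIcc ε a = Set.Icc ε a := Set.uIcc_of_le hεa
    have hposmem : ∀ x ∈ Set.uIcc ε a, 0 < x := by
      intro x hx; rw [hicc] at hx; exact lt_of_lt_of_le hε hx.1
    have hint : IntervalIntegrable (fun t => Real.sin (p * t) / (p * t)) volume ε a := by
      apply ContinuousOn.intervalIntegrable
      apply ContinuousOn.div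
      · exact (Real.continuous_sin.comp (continuous_const.mul continuous_id)).continuousOn
      · exact (continuous_const.mul continuous_id).continuousOn
      · intro x hx
        exact mul_ne_zero hp (hposmem x hx).ne'
    have e1 : (∫ t in ε..a, Real.sin (p * t) / (p * t)) = F a - F ε :=
      intervalIntegral.integral_eq_sub_of_hasDerivAt
        (fun x hx => hderivF x (hposmem x hx)) hint
    have e2 : (∫ t in ε..a, Real.sin (p * t) / (p * t)) = G a - G ε :=
      intervalIntegral.integral_eq_sub_of_hasDerivAt
        (fun x hx => hderivG x (hposmem x hx)) hint
    have := e1.symm.trans e2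
    linarith
  -- bounds near 0
  have hFbound : ∀ ε : ℝ, 0 < ε → ε ≤ 1 → |F ε| ≤ 6 * Real.sqrt ε := by
    intro ε hε hε1
    have hsq : Real.sqrt ε = ε ^ ((1:ℝ)/2) := Real.sqrt_eq_rpow ε
    have hrw : ε ^ (-(1/2):ℝ) * ε = ε ^ ((1:ℝ)/2) := by
      nth_rewrite 2 [← Real.rpow_one ε]
      rw [← Real.rpow_add hε]
      norm_num
    -- first term
    have h1 : |Real.log ε * (Real.sin (p * ε) / p)| ≤ 2 * Real.sqrt ε := by
      rw [abs_mul]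
      have hs : |Real.sin (p * ε) / p| ≤ ε := by
        rw [abs_div]
        rcases eq_or_ne p 0 with rfl | hp'
        · simp [hε.le]
        · rw [div_le_iff₀ (abs_pos.2 hp')]
          calc |Real.sin (p * ε)| ≤ |p * ε| := Real.abs_sin_le_abs
            _ = ε * |p| := by rw [abs_mul, abs_of_nonneg hε.le]; ring
      have hl := abs_log_le_rpow hε hε1
      calc |Real.log ε| * |Real.sin (p * ε) / p|
          ≤ (2 * ε ^ (-(1/2):ℝ)) * ε := by
            apply mul_le_mul hl hs (abs_nonneg _) (by positivity)
        _ = 2 * Real.sqrt ε := by rw [hsq, mul_assoc, hrw]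
    -- second term
    have h2 : ‖∫ u in (0:ℝ)..ε, Real.log u * Real.cos (p * u)‖ ≤ 4 * Real.sqrt ε := by
      have hg : IntervalIntegrable (fun u : ℝ => 2 * u ^ (-(1/2):ℝ)) volume 0 ε :=
        (intervalIntegral.intervalIntegrable_rpow' (by norm_num)).const_mul 2
      have hb := intervalIntegral.norm_integral_le_abs_of_norm_le
        (f := fun u => Real.log u * Real.cos (p * u))
        (g := fun u : ℝ => 2 * u ^ (-(1/2):ℝ)) (μ := volume) ?_ hg
      · refine hb.trans ?_
        have hval : (∫ u in (0:ℝ)..ε, 2 * u ^ (-(1/2):ℝ)) = 4 * Real.sqrt ε := by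
          rw [intervalIntegral.integral_const_mul, integral_rpow (Or.inl (by norm_num))]
          rw [Real.zero_rpow (by norm_num)]
          rw [hsq]
          norm_num
          ring
        rw [hval, abs_of_nonneg (by positivity)]
      · filter_upwards [MeasureTheory.ae_restrict_mem measurableSet_uIoc] with x hx
        rw [Set.uIoc_of_le hε.le] at hx
        have hl := abs_log_le_rpow hx.1 (hx.2.trans hε1)
        have hc : |Real.cos (p * x)| ≤ 1 := Real.abs_cos_le_one _
        rw [Real.norm_eq_abs, abs_mul]
        nlinarith [abs_nonneg (Real.log x)]
    calc |F ε| ≤ |Real.log ε * (Real.sin (p * ε) / p)|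
        + ‖∫ u in (0:ℝ)..ε, Real.log u * Real.cos (p * u)‖ := abs_sub _ _
      _ ≤ 2 * Real.sqrt ε + 4 * Real.sqrt ε := add_le_add h1 h2
      _ = 6 * Real.sqrt ε := by ring
  have hGbound : ∀ ε : ℝ, 0 < ε → |G ε| ≤ ε := by
    intro ε hε
    have h1 : ‖∫ t in (0:ℝ)..ε, (1 - Real.cos (p * t)) / (p ^ 2 * t ^ 2)‖ ≤ ε / 2 := by
      have hb := intervalIntegral.norm_integral_le_of_norm_le_const_ae
        (C := (1/2 : ℝ)) (f := fun t => (1 - Real.cos (p * t)) / (p ^ 2 * t ^ 2))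
        (a := (0:ℝ)) (b := ε) ?_
      · rw [sub_zero, abs_of_nonneg hε.le] at hb; linarith
      · exact Filter.Eventually.of_forall fun t _ => h_norm_bound p t
    have h2 : |(1 - Real.cos (p * ε)) / (p ^ 2 * ε)| ≤ ε / 2 := by
      have hc : 1 - (p*ε)^2/2 ≤ Real.cos (p*ε) := Real.one_sub_sq_div_two_le_cos
      have hc1 : Real.cos (p*ε) ≤ 1 := Real.cos_le_one _
      have hpos : 0 < p ^ 2 * ε := by positivity
      rw [abs_of_nonneg (div_nonneg (by linarith) hpos.le), div_le_iff₀ hpos]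
      nlinarith
    calc |G ε| ≤ ‖∫ t in (0:ℝ)..ε, (1 - Real.cos (p * t)) / (p ^ 2 * t ^ 2)‖
        + |(1 - Real.cos (p * ε)) / (p ^ 2 * ε)| := abs_add_le _ _
      _ ≤ ε / 2 + ε / 2 := add_le_add h1 h2
      _ = ε := by ring
  -- conclude
  have habs : |F a - G a| ≤ 0 := by
    have hten : Filter.Tendsto (fun ε : ℝ => 7 * Real.sqrt ε) (nhdsWithin 0 (Set.Ioi 0)) (nhds 0) := by
      apply Filter.Tendsto.mono_left _ nhdsWithin_le_nhds
      have hc : Continuous fun ε : ℝ => 7 * Real.sqrt ε :=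
        continuous_const.mul Real.continuous_sqrt
      have := hc.tendsto 0
      simpa using this
    refine ge_of_tendsto hten ?_
    have hmem : Set.Ioc (0:ℝ) (min 1 a) ∈ nhdsWithin (0:ℝ) (Set.Ioi 0) :=
      Ioc_mem_nhdsGT_of_mem ⟨le_refl 0, lt_min one_pos ha⟩
    filter_upwards [hmem] with ε hε
    have hε0 : 0 < ε := hε.1
    have hε1 : ε ≤ 1 := hε.2.trans (min_le_left _ _)
    have hεa : ε ≤ a := hε.2.trans (min_le_right _ _)
    have heq := hFG ε hε0 hεa
    have hεsqrt : ε ≤ Real.sqrt ε := by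
      have hs1 : Real.sqrt ε ≤ 1 := by
        rw [show (1:ℝ) = Real.sqrt 1 by simp]
        exact Real.sqrt_le_sqrt hε1
      calc ε = Real.sqrt ε * Real.sqrt ε := (Real.mul_self_sqrt hε0.le).symm
        _ ≤ Real.sqrt ε * 1 := mul_le_mul_of_nonneg_left hs1 (Real.sqrt_nonneg _)
        _ = Real.sqrt ε := mul_one _
    calc |F a - G a| = |F ε - G ε| := by rw [heq]
      _ ≤ |F ε| + |G ε| := abs_sub _ _
      _ ≤ 6 * Real.sqrt ε + ε := add_le_add (hFbound ε hε0 hε1) (hGbound ε hε0)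
      _ ≤ 7 * Real.sqrt ε := by linarith
  have : F a = G a := by
    have := abs_nonneg (F a - G a)
    have h0 : |F a - G a| = 0 := le_antisymm habs this
    have := abs_eq_zero.mp h0
    linarith
  exact this

open Real intervalIntegral in
private lemma G_pos {a p : ℝ} (ha : 0 < a) (hp : p ≠ 0) :
    0 < (∫ t in (0:ℝ)..a, (1 - Real.cos (p * t)) / (p ^ 2 * t ^ 2))
      + (1 - Real.cos (p * a)) / (p ^ 2 * a) := by
  have hb2 : 0 ≤ (1 - Real.cos (p * a)) / (p ^ 2 * a) :=
    div_nonneg (by nlinarith [Real.cos_le_one (p * a)]) (by positivity)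
  have hmain : 0 < ∫ t in (0:ℝ)..a, (1 - Real.cos (p * t)) / (p ^ 2 * t ^ 2) := by
    set δ := min a (Real.pi / |p|) with hδdef
    have hδ : 0 < δ := lt_min ha (div_pos Real.pi_pos (abs_pos.2 hp))
    have hδa : δ ≤ a := min_le_left _ _
    have hi1 : IntervalIntegrable (fun t => (1 - Real.cos (p * t)) / (p ^ 2 * t ^ 2)) volume 0 δ :=
      il_h δ
    have hi2 : IntervalIntegrable (fun t => (1 - Real.cos (p * t)) / (p ^ 2 * t ^ 2)) volume δ a :=
      (il_h δ).symm.trans (il_h a)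
    rw [← intervalIntegral.integral_add_adjacent_intervals hi1 hi2]
    have h1 : 0 < ∫ t in (0:ℝ)..δ, (1 - Real.cos (p * t)) / (p ^ 2 * t ^ 2) := by
      refine intervalIntegral.intervalIntegral_pos_of_pos_on hi1 ?_ hδ
      intro x hx
      have hx0 : 0 < x := hx.1
      have hcos : Real.cos (p * x) < 1 := by
        have h0 : 0 < |p * x| := abs_pos.2 (mul_ne_zero hp hx0.ne')
        have hπ : |p * x| ≤ Real.pi := by
          rw [abs_mul, abs_of_nonneg hx0.le]
          have hxδ : x ≤ Real.pi / |p| := le_of_lt (lt_of_lt_of_le hx.2 (min_le_right _ _))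
          calc |p| * x ≤ |p| * (Real.pi / |p|) :=
                mul_le_mul_of_nonneg_left hxδ (abs_nonneg p)
            _ = Real.pi := by field_simp
        calc Real.cos (p * x) = Real.cos |p * x| := (Real.cos_abs _).symm
          _ < Real.cos 0 := Real.strictAntiOn_cos ⟨le_refl 0, Real.pi_pos.le⟩
              ⟨abs_nonneg _, hπ⟩ h0
          _ = 1 := Real.cos_zero
      exact div_pos (by linarith) (by positivity)
    have h2 : 0 ≤ ∫ t in δ..a, (1 - Real.cos (p * t)) / (p ^ 2 * t ^ 2) := by
      refine intervalIntegral.integral_nonneg hδa fun u hu => ?_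
      exact div_nonneg (by nlinarith [Real.cos_le_one (p * u)]) (by positivity)
    linarith
  linarith

/-- Positivity of the Fourier transform of the one-dimensional kernel
`L(u) = −(1/(16π))·log|u/(2μ)|·1_{[−2μ,2μ]}(u)`: for every `μ > 0` and every
`p ∈ ℝ` one has `∫_{−2μ}^{2μ} (−log(|u|/(2μ)))·cos(p·u) du > 0`. -/
theorem statement1 (μ p : ℝ) (hμ : 0 < μ) :
    0 < ∫ u in (-(2 * μ))..(2 * μ), (-Real.log (|u| / (2 * μ))) * Real.cos (p * u) := by
  set a : ℝ := 2 * μ with hadef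
  have ha : 0 < a := by positivity
  set f : ℝ → ℝ := fun u => (-Real.log (|u| / a)) * Real.cos (p * u) with hfdef
  -- integrability on [0, a]
  have hmeas : Measurable f := by
    apply Measurable.mul
    · exact (Real.measurable_log.comp (measurable_abs.div_const a)).neg
    · exact Real.continuous_cos.measurable.comp (measurable_const.mul measurable_id)
  have hint0a : IntervalIntegrable f volume 0 a := by
    refine ((il_log ha).norm.add (_root_.intervalIntegrable_const (c := |Real.log a|))).mono_fun'
      hmeas.aestronglyMeasurable ?_
    filter_upwards [MeasureTheory.ae_restrict_mem measurableSet_uIoc] with x hx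
    rw [Set.uIoc_of_le ha.le] at hx
    have hx0 : 0 < x := hx.1
    have habs : |x| = x := abs_of_pos hx0
    have hlog : Real.log (|x| / a) = Real.log x - Real.log a := by
      rw [habs, Real.log_div hx0.ne' ha.ne']
    have hc : |Real.cos (p * x)| ≤ 1 := Real.abs_cos_le_one _
    simp only [hfdef, Real.norm_eq_abs, norm_norm, abs_mul, abs_neg, hlog]
    have h1 : |Real.log x - Real.log a| ≤ |Real.log x| + |Real.log a| := abs_sub _ _
    nlinarith [abs_nonneg (Real.log x - Real.log a), abs_nonneg (Real.log x),
      abs_nonneg (Real.log a)]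
  have hintneg : IntervalIntegrable f volume (-a) 0 := by
    have heven : (fun x => f (-x)) = f := by
      funext x
      simp only [hfdef, abs_neg, mul_neg, Real.cos_neg]
    have := (IntervalIntegrable.iff_comp_neg (f := f)).mp hint0a
    rw [heven] at this
    simpa using this.symm
  -- evenness
  have heq : (∫ u in (-a)..0, f u) = ∫ u in (0:ℝ)..a, f u := by
    have h1 : (∫ u in (0:ℝ)..a, f (-u)) = ∫ u in (-a)..(-0:ℝ), f u :=
      intervalIntegral.integral_comp_neg f
    have heven : (fun x : ℝ => f (-x)) = f := by
      funext x
      simp only [hfdef, abs_neg, mul_neg, Real.cos_neg]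
    rw [heven, neg_zero] at h1
    exact h1.symm
  have hsplit : (∫ u in (-a)..a, f u) = 2 * ∫ u in (0:ℝ)..a, f u := by
    rw [← intervalIntegral.integral_add_adjacent_intervals hintneg hint0a, heq]
    ring
  -- main reduction
  have hcongr : (∫ u in (0:ℝ)..a, f u)
      = ∫ u in (0:ℝ)..a, (Real.log a - Real.log u) * Real.cos (p * u) := by
    refine intervalIntegral.integral_congr_ae ?_
    refine Filter.Eventually.of_forall fun x hx => ?_
    rw [Set.uIoc_of_le ha.le] at hx
    have hx0 : 0 < x := hx.1
    simp only [hfdef]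
    rw [abs_of_pos hx0, Real.log_div hx0.ne' ha.ne']
    ring
  have hpos : 0 < ∫ u in (0:ℝ)..a, (Real.log a - Real.log u) * Real.cos (p * u) := by
    rcases eq_or_ne p 0 with rfl | hp
    · have hsimp : (∫ u in (0:ℝ)..a, (Real.log a - Real.log u) * Real.cos (0 * u))
          = ∫ u in (0:ℝ)..a, (Real.log a - Real.log u) := by
        congr 1; funext u; simp
      rw [hsimp]
      refine intervalIntegral.intervalIntegral_pos_of_pos_on
        (intervalIntegrable_const.sub (il_log ha)) ?_ ha
      intro x hx
      have := Real.log_lt_log hx.1 hx.2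
      linarith
    · rw [key_identity ha hp]
      exact G_pos ha hp
  show 0 < ∫ u in (-a)..a, f u
  rw [hsplit, hcongr]
  linarith
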